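/- Let H be an algebra subgroup of an algebra group G = 1 + J over F_q, and suppose: (1) no two distinct superclasses of H are contained in the same superclass of G; and (2') (h−1)y+1 ∈ H for all y ∈ G and h ∈ H. Then SInd_H^G(χ) = Ind_H^G(χ) for every superclass function χ of H. -/

import Mathlib

/-!
STATEMENT 5: Let H be an algebra subgroup of an algebra group G = 1 + J over F_q, and
suppose (1) no two distinct superclasses of H are contained in the same superclass of G,
and (2′) (h−1)y+1 ∈ H for all y ∈ G and h ∈ H.  Then SInd_H^G(χ) = Ind_H^G(χ)
for every superclass function χ of H.
-/
open scoped Classical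

noncomputable section

def setFinset {α : Type*} [Fintype α] (S : Set α) : Finset α :=
  Finset.univ.filter (· ∈ S)

/-- The algebra group `1 + J` attached to a nilpotent algebra `J`. -/
def algebraGroup {A : Type*} [Ring A] (J : Set A) : Set A :=
  (fun a => 1 + a) '' J

/-- `χ` is constant on the superclasses of `G`: `u ~ v` iff `v − 1 ∈ G(u−1)G`. -/
def IsSuperclassFn {A : Type*} [Ring A] (G : Set A) (χ : A → ℂ) : Prop :=
  ∀ u ∈ G, ∀ v ∈ G, (∃ x ∈ G, ∃ y ∈ G, v - 1 = x * (u - 1) * y) → χ u = χ v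

/-- Superinduction `SInd_H^G(χ)(g) = (1/(|G||H|)) Σ_{x,y∈G} χ̇(x(g−1)y + 1)`. -/
def SInd {A : Type*} [Ring A] [Fintype A] (G H : Set A) (χ : A → ℂ) (g : A) : ℂ :=
  (((setFinset G).card : ℂ) * ((setFinset H).card : ℂ))⁻¹ *
    ∑ x ∈ setFinset G, ∑ y ∈ setFinset G,
      if x * (g - 1) * y + 1 ∈ H then χ (x * (g - 1) * y + 1) else 0

/-- Induction `Ind_H^G(χ)(g) = (1/|H|) Σ_{y∈G} χ̇(y⁻¹ g y)`. -/
def Ind {A : Type*} [Ring A] [Fintype A] (G H : Set A) (χ : A → ℂ) (g : A) : ℂ :=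
  ((setFinset H).card : ℂ)⁻¹ *
    ∑ y ∈ setFinset G,
      if Ring.inverse y * g * y ∈ H then χ (Ring.inverse y * g * y) else 0


section Aux

lemma ring_inverse_eq' {A : Type*} [Ring A] {x z : A} (h1 : x * z = 1) (h2 : z * x = 1) :
    Ring.inverse x = z := by
  have hu : IsUnit x := ⟨⟨x, z, h1, h2⟩, rfl⟩
  have h := Ring.mul_inverse_cancel x hu
  calc Ring.inverse x = (z * x) * Ring.inverse x := by rw [h2, one_mul]
    _ = z * (x * Ring.inverse x) := by rw [mul_assoc]
    _ = z := by rw [h, mul_one]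

variable {F : Type*} [Field F] {A : Type*} [Ring A] [Algebra F A]

lemma mem_algebraGroup {S : Set A} {a : A} : a ∈ algebraGroup S ↔ a - 1 ∈ S := by
  constructor
  · rintro ⟨j, hj, rfl⟩; simpa using hj
  · intro h; exact ⟨a - 1, h, by noncomm_ring⟩

lemma one_mem_algebraGroup (J : NonUnitalSubalgebra F A) :
    (1 : A) ∈ algebraGroup (J : Set A) :=
  mem_algebraGroup.2 (by rw [sub_self]; exact J.zero_mem)

lemma neg_mem'' (J : NonUnitalSubalgebra F A) {a : A} (ha : a ∈ J) : -a ∈ J := by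
  have := J.smul_mem (-1 : F) ha
  simpa [neg_one_smul] using this

lemma exists_inverse (J : NonUnitalSubalgebra F A)
    (hnil : ∃ k : ℕ, ∀ l : List A, (∀ x ∈ l, x ∈ J) → k ≤ l.length → l.prod = 0)
    {x : A} (hx : x ∈ algebraGroup (J : Set A)) :
    ∃ z ∈ algebraGroup (J : Set A), x * z = 1 ∧ z * x = 1 := by
  obtain ⟨k, hk⟩ := hnil
  rw [mem_algebraGroup, SetLike.mem_coe] at hx
  set a : A := x - 1 with ha
  have hxa : x = 1 + a := by rw [ha]; noncomm_ring
  have hnegmem : -a ∈ J := neg_mem'' J hx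
  have hpow : ∀ i : ℕ, 1 ≤ i → (-a) ^ i ∈ J := by
    intro i hi
    induction i, hi using Nat.le_induction with
    | base => simpa using hnegmem
    | succ n hn ih => rw [pow_succ]; exact J.mul_mem ih hnegmem
  set n := max k 1 with hn
  have h0 : 0 < n := lt_of_lt_of_le one_pos (le_max_right k 1)
  have hk' : (-a) ^ n = 0 := by
    have := hk (List.replicate n (-a)) ?_ ?_
    · simpa [List.prod_replicate] using this
    · intro y hy; rw [List.eq_of_mem_replicate hy]; exact hnegmem
    · simp [hn]
  refine ⟨∑ i ∈ Finset.range n, (-a) ^ i, ?_, ?_, ?_⟩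
  · rw [mem_algebraGroup, SetLike.mem_coe]
    rw [Finset.sum_range_eq_add_Ico _ h0]
    have h1 : (-a) ^ 0 + (∑ i ∈ Finset.Ico 1 n, (-a) ^ i) - 1
        = ∑ i ∈ Finset.Ico 1 n, (-a) ^ i := by simp
    rw [h1]
    exact sum_mem fun i hi => hpow i (Finset.mem_Ico.1 hi).1
  · have h := mul_geom_sum (-a) n
    rw [hk'] at h
    have h2 : x * ∑ i ∈ Finset.range n, (-a) ^ i
        = -((-a - 1) * ∑ i ∈ Finset.range n, (-a) ^ i) := by
      rw [hxa]; noncomm_ring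
    rw [h2, h]; noncomm_ring
  · have h := geom_sum_mul (-a) n
    rw [hk'] at h
    have h2 : (∑ i ∈ Finset.range n, (-a) ^ i) * x
        = -((∑ i ∈ Finset.range n, (-a) ^ i) * (-a - 1)) := by
      rw [hxa]; noncomm_ring
    rw [h2, h]; noncomm_ring

end Aux


theorem sind_eq_ind_of_superclass_separation_and_right_stability
    (F : Type*) [Field F] [Fintype F]
    (A : Type*) [Ring A] [Algebra F A] [Fintype A]
    (J J' : NonUnitalSubalgebra F A)
    (hnil : ∃ k : ℕ, ∀ l : List A, (∀ x ∈ l, x ∈ J) → k ≤ l.length → l.prod = 0)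
    (hsub : (J' : Set A) ⊆ (J : Set A))
    (h1 : ∀ h ∈ algebraGroup (J' : Set A), ∀ h' ∈ algebraGroup (J' : Set A),
      (∃ x ∈ algebraGroup (J : Set A), ∃ y ∈ algebraGroup (J : Set A),
          h' - 1 = x * (h - 1) * y) →
      (∃ x ∈ algebraGroup (J' : Set A), ∃ y ∈ algebraGroup (J' : Set A),
          h' - 1 = x * (h - 1) * y))
    (h2' : ∀ y ∈ algebraGroup (J : Set A), ∀ h ∈ algebraGroup (J' : Set A),
      (h - 1) * y + 1 ∈ algebraGroup (J' : Set A)) :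
    ∀ χ : A → ℂ, IsSuperclassFn (algebraGroup (J' : Set A)) χ →
      ∀ g ∈ algebraGroup (J : Set A),
        SInd (algebraGroup (J : Set A)) (algebraGroup (J' : Set A)) χ g =
          Ind (algebraGroup (J : Set A)) (algebraGroup (J' : Set A)) χ g := by
  intro χ hχ g hg
  set Gs : Set A := algebraGroup (J : Set A) with hGs
  set Hs : Set A := algebraGroup (J' : Set A) with hHs
  have hone : (1 : A) ∈ Gs := one_mem_algebraGroup J
  have honeH : (1 : A) ∈ Hs := one_mem_algebraGroup J'
  -- membership transfer
  have key_mem : ∀ a : A, a + 1 ∈ Hs → ∀ y ∈ Gs, a * y + 1 ∈ Hs := by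
    intro a ha y hy
    have := h2' y hy (a + 1) ha
    simpa using this
  have key_mem_rev : ∀ a : A, ∀ y ∈ Gs, a * y + 1 ∈ Hs → a + 1 ∈ Hs := by
    intro a y hy hmem
    obtain ⟨z, hz, hyz, hzy⟩ := exists_inverse J hnil hy
    have h := key_mem (a * y) hmem z hz
    rwa [mul_assoc, hyz, mul_one] at h
  have key_chi : ∀ a : A, a + 1 ∈ Hs → ∀ y ∈ Gs, χ (a * y + 1) = χ (a + 1) := by
    intro a ha y hy
    have hmem := key_mem a ha y hy
    have hex : ∃ x ∈ Gs, ∃ y' ∈ Gs, (a * y + 1) - 1 = x * ((a + 1) - 1) * y' :=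
      ⟨1, hone, y, hy, by noncomm_ring⟩
    have hex' := h1 (a + 1) ha (a * y + 1) hmem hex
    exact (hχ (a + 1) ha (a * y + 1) hmem hex').symm
  -- the extended class function
  set f : A → ℂ := fun m => if m + 1 ∈ Hs then χ (m + 1) else 0 with hf
  have hf_apply : ∀ m : A, f m = if m + 1 ∈ Hs then χ (m + 1) else 0 := fun m => rfl
  have hf_mul : ∀ (a : A), ∀ y ∈ Gs, f (a * y) = f a := by
    intro a y hy
    by_cases ha : a + 1 ∈ Hs
    · simp only [hf, if_pos (key_mem a ha y hy), if_pos ha, key_chi a ha y hy]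
    · have hnot : ¬ (a * y + 1 ∈ Hs) := fun h => ha (key_mem_rev a y hy h)
      simp only [hf, if_neg hnot, if_neg ha]
  -- cardinalities
  have hcardG : ((setFinset Gs).card : ℂ) ≠ 0 := by
    have h1' : (1 : A) ∈ setFinset Gs := by simp [setFinset, hone]
    exact Nat.cast_ne_zero.2 (Finset.card_pos.2 ⟨1, h1'⟩).ne'
  have hcardH : ((setFinset Hs).card : ℂ) ≠ 0 := by
    have h1' : (1 : A) ∈ setFinset Hs := by simp [setFinset, honeH]
    exact Nat.cast_ne_zero.2 (Finset.card_pos.2 ⟨1, h1'⟩).ne'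
  -- the SInd sum collapses
  have hS : (∑ x ∈ setFinset Gs, ∑ y ∈ setFinset Gs,
      if x * (g - 1) * y + 1 ∈ Hs then χ (x * (g - 1) * y + 1) else 0)
      = ((setFinset Gs).card : ℂ) * ∑ x ∈ setFinset Gs, f (x * (g - 1)) := by
    rw [Finset.mul_sum]
    refine Finset.sum_congr rfl ?_
    intro x _
    have hstep : ∀ y ∈ setFinset Gs,
        (if x * (g - 1) * y + 1 ∈ Hs then χ (x * (g - 1) * y + 1) else 0)
          = f (x * (g - 1)) := by
      intro y hy
      have hy' : y ∈ Gs := by simpa [setFinset] using hy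
      rw [← hf_apply (x * (g - 1) * y)]
      exact hf_mul (x * (g - 1)) y hy'
    rw [Finset.sum_congr rfl hstep, Finset.sum_const, nsmul_eq_mul]
  -- the Ind sum
  have hI : (∑ y ∈ setFinset Gs,
      if Ring.inverse y * g * y ∈ Hs then χ (Ring.inverse y * g * y) else 0)
      = ∑ x ∈ setFinset Gs, f (x * (g - 1)) := by
    have step1 : ∀ y ∈ setFinset Gs,
        (if Ring.inverse y * g * y ∈ Hs then χ (Ring.inverse y * g * y) else 0)
          = f (Ring.inverse y * (g - 1)) := by
      intro y hy
      have hy' : y ∈ Gs := by simpa [setFinset] using hy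
      obtain ⟨z, hz, hyz, hzy⟩ := exists_inverse J hnil hy'
      have hinv : Ring.inverse y = z := ring_inverse_eq' hyz hzy
      have hexpr : Ring.inverse y * g * y = (Ring.inverse y * (g - 1)) * y + 1 := by
        rw [hinv]
        have h3 : z * g * y = z * (g - 1) * y + z * y := by noncomm_ring
        rw [h3, hzy]
      rw [hexpr, ← hf_apply (Ring.inverse y * (g - 1) * y)]
      exact hf_mul (Ring.inverse y * (g - 1)) y hy'
    rw [Finset.sum_congr rfl step1]
    refine Finset.sum_nbij' (fun y => Ring.inverse y) (fun x => Ring.inverse x)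
      ?_ ?_ ?_ ?_ ?_
    · intro y hy
      have hy' : y ∈ Gs := by simpa [setFinset] using hy
      obtain ⟨z, hz, hyz, hzy⟩ := exists_inverse J hnil hy'
      have hinv : Ring.inverse y = z := ring_inverse_eq' hyz hzy
      simp [setFinset, hinv]; exact hz
    · intro x hx
      have hx' : x ∈ Gs := by simpa [setFinset] using hx
      obtain ⟨z, hz, hyz, hzy⟩ := exists_inverse J hnil hx'
      have hinv : Ring.inverse x = z := ring_inverse_eq' hyz hzy
      simp [setFinset, hinv]; exact hz
    · intro y hy
      have hy' : y ∈ Gs := by simpa [setFinset] using hy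
      obtain ⟨z, hz, hyz, hzy⟩ := exists_inverse J hnil hy'
      show Ring.inverse (Ring.inverse y) = y
      rw [ring_inverse_eq' hyz hzy, ring_inverse_eq' hzy hyz]
    · intro x hx
      have hx' : x ∈ Gs := by simpa [setFinset] using hx
      obtain ⟨z, hz, hyz, hzy⟩ := exists_inverse J hnil hx'
      show Ring.inverse (Ring.inverse x) = x
      rw [ring_inverse_eq' hyz hzy, ring_inverse_eq' hzy hyz]
    · intro y _
      rfl
  -- put everything together
  rw [SInd, Ind, hS, hI]
  rw [mul_inv]
  field_simp
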